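/- One has the identity I_q = D D* + R Σ R*; consequently (combining with the bound on the largest eigenvalue of R Σ R* and Weyl's inequality) the smallest eigenvalue Δ_q of the Hermitian positive semidefinite matrix D D* satisfies 1 ≥ Δ_q ≥ 1 − λ_{q+1}(Σ)/μ_q. -/

import Mathlib

open Matrix ComplexOrder

/-- The `j`-th largest eigenvalue (1-indexed) of a Hermitian complex matrix
(junk value otherwise). -/
noncomputable def eigJ {n : ℕ} (A : Matrix (Fin n) (Fin n) ℂ) (j : ℕ) : ℝ :=
  if hA : A.IsHermitian then
    ((Finset.univ.val.map hA.eigenvalues).sort (· ≤ ·)).getD (n - j) 0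
  else 0

lemma eigJ_exists {n : ℕ} {A : Matrix (Fin n) (Fin n) ℂ} (hA : A.IsHermitian)
    {j : ℕ} (hj1 : 1 ≤ j) (hjn : j ≤ n) : ∃ i, hA.eigenvalues i = eigJ A j := by
  rw [eigJ, dif_pos hA]
  set L := ((Finset.univ.val.map hA.eigenvalues).sort (· ≤ ·)) with hL
  have hlen : L.length = n := by simp [hL]
  have hidx : n - j < L.length := by omega
  rw [List.getD_eq_getElem _ _ hidx]
  have hmem : L[n-j] ∈ L := List.getElem_mem _
  have := (Multiset.mem_sort _).1 hmem
  obtain ⟨i, -, hi⟩ := Multiset.mem_map.1 this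
  exact ⟨i, hi⟩

lemma eigJ_anti {n : ℕ} {A : Matrix (Fin n) (Fin n) ℂ} (hA : A.IsHermitian)
    {j k : ℕ} (hj1 : 1 ≤ j) (hjk : j ≤ k) (hkn : k ≤ n) : eigJ A k ≤ eigJ A j := by
  rw [eigJ, dif_pos hA, eigJ, dif_pos hA]
  set L := ((Finset.univ.val.map hA.eigenvalues).sort (· ≤ ·)) with hL
  have hlen : L.length = n := by simp [hL]
  have h1 : n - k < L.length := by omega
  have h2 : n - j < L.length := by omega
  rw [List.getD_eq_getElem _ _ h1, List.getD_eq_getElem _ _ h2]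
  have hs : L.Pairwise (· ≤ ·) := Multiset.pairwise_sort ..
  exact hs.rel_get_of_le (a := ⟨n-k, h1⟩) (b := ⟨n-j, h2⟩) (by simp; omega)

lemma eigenvalues_le_of_psd {k : ℕ} {A : Matrix (Fin k) (Fin k) ℂ} (hA : A.IsHermitian) {c : ℝ}
    (h : (((c : ℂ) • 1 - A)).PosSemidef) (i : Fin k) : hA.eigenvalues i ≤ c := by
  set x : Fin k → ℂ := ⇑(hA.eigenvectorBasis i) with hx
  have h2 := h.dotProduct_mulVec_nonneg x
  have hmv : ((c : ℂ) • 1 - A).mulVec x = ((c - hA.eigenvalues i : ℝ) : ℂ) • x := by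
    rw [Matrix.sub_mulVec, Matrix.smul_mulVec, Matrix.one_mulVec,
      hA.mulVec_eigenvectorBasis]
    push_cast
    rw [sub_smul]
    congr 1
  rw [hmv, dotProduct_smul] at h2
  have hinner : (inner ℂ (hA.eigenvectorBasis i) (hA.eigenvectorBasis i) : ℂ) = star x ⬝ᵥ x :=
    (EuclideanSpace.inner_eq_star_dotProduct _ _).trans (dotProduct_comm _ _)
  have hxx : star x ⬝ᵥ x = 1 := by
    rw [← hinner, inner_self_eq_norm_sq_to_K, hA.eigenvectorBasis.orthonormal.1 i]
    norm_num
  rw [hxx, smul_eq_mul, mul_one, Complex.zero_le_real] at h2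
  linarith

lemma le_eigenvalues_of_psd {k : ℕ} {A : Matrix (Fin k) (Fin k) ℂ} (hA : A.IsHermitian) {c : ℝ}
    (h : (A - (c : ℂ) • 1).PosSemidef) (i : Fin k) : c ≤ hA.eigenvalues i := by
  set x : Fin k → ℂ := ⇑(hA.eigenvectorBasis i) with hx
  have h2 := h.dotProduct_mulVec_nonneg x
  have hmv : (A - (c : ℂ) • 1).mulVec x = ((hA.eigenvalues i - c : ℝ) : ℂ) • x := by
    rw [Matrix.sub_mulVec, Matrix.smul_mulVec, Matrix.one_mulVec,
      hA.mulVec_eigenvectorBasis]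
    push_cast
    rw [sub_smul]
    congr 1
  rw [hmv, dotProduct_smul] at h2
  have hinner : (inner ℂ (hA.eigenvectorBasis i) (hA.eigenvectorBasis i) : ℂ) = star x ⬝ᵥ x :=
    (EuclideanSpace.inner_eq_star_dotProduct _ _).trans (dotProduct_comm _ _)
  have hxx : star x ⬝ᵥ x = 1 := by
    rw [← hinner, inner_self_eq_norm_sq_to_K, hA.eigenvectorBasis.orthonormal.1 i]
    norm_num
  rw [hxx, smul_eq_mul, mul_one, Complex.zero_le_real] at h2
  linarith

/-- rows-times-conjTranspose-of-rows. -/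
lemma rows_mul_conjT {a b n : ℕ} (x : Fin a → Fin n → ℂ) (y : Fin b → Fin n → ℂ) :
    (Matrix.of fun j i => star (x j i)) * (Matrix.of fun j i => star (y j i))ᴴ
      = Matrix.of fun j k => star (x j) ⬝ᵥ y k := by
  ext j k
  simp [Matrix.mul_apply, Matrix.conjTranspose_apply, dotProduct]

/-- eigen-equations in matrix form. -/
lemma mul_conjT_rows_eq {a n : ℕ} (A : Matrix (Fin n) (Fin n) ℂ) (x : Fin a → Fin n → ℂ)
    (lam : Fin a → ℝ) (h : ∀ j, A.mulVec (x j) = ((lam j : ℝ) : ℂ) • x j) :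
    A * (Matrix.of fun j i => star (x j i))ᴴ
      = (Matrix.of fun j i => star (x j i))ᴴ * Matrix.diagonal (fun j => ((lam j : ℝ) : ℂ)) := by
  ext i j
  have hj := congrFun (h j) i
  simp only [Matrix.mulVec, dotProduct, Pi.smul_apply, smul_eq_mul] at hj
  simp only [Matrix.mul_apply, Matrix.conjTranspose_apply, Matrix.of_apply, star_star,
    Matrix.diagonal_apply, mul_ite, mul_zero, Finset.sum_ite_eq', Finset.mem_univ, if_true]
  rw [hj, mul_comm]

lemma emb_mul_conj {m n : ℕ} (h : m ≤ n) (A : Matrix (Fin n) (Fin n) ℂ) :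
    (1 : Matrix (Fin n) (Fin n) ℂ).submatrix (Fin.castLE h) id * A *
      ((1 : Matrix (Fin n) (Fin n) ℂ).submatrix (Fin.castLE h) id)ᴴ
      = A.submatrix (Fin.castLE h) (Fin.castLE h) := by
  ext i i'
  simp [Matrix.mul_apply, Matrix.submatrix_apply, Matrix.one_apply, Matrix.conjTranspose_apply,
    apply_ite (starRingEnd ℂ), ite_mul, mul_ite, Finset.sum_ite_eq, Finset.sum_ite_eq']

lemma emb_mul_emb {m n : ℕ} (h : m ≤ n) :
    (1 : Matrix (Fin n) (Fin n) ℂ).submatrix (Fin.castLE h) id *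
      ((1 : Matrix (Fin n) (Fin n) ℂ).submatrix (Fin.castLE h) id)ᴴ = 1 := by
  have := emb_mul_conj h 1
  rw [Matrix.mul_one] at this
  rw [this]
  ext i j
  simp [Matrix.one_apply, Fin.castLE_inj]

lemma pad_eq_mul {q m n : ℕ} (h : m ≤ n) (P : Matrix (Fin q) (Fin m) ℂ) :
    (Matrix.of fun j (i : Fin n) => if hi : (i : ℕ) < m then P j ⟨(i : ℕ), hi⟩ else 0)
      = P * (1 : Matrix (Fin n) (Fin n) ℂ).submatrix (Fin.castLE h) id := by
  ext j a
  simp only [Matrix.mul_apply, Matrix.submatrix_apply, Matrix.one_apply, id_eq,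
    Matrix.of_apply, mul_ite, mul_one, mul_zero]
  by_cases ha : (a : ℕ) < m
  · rw [dif_pos ha, Finset.sum_eq_single (⟨(a : ℕ), ha⟩ : Fin m)]
    · rw [if_pos (by ext; simp)]
    · intro b _ hb
      rw [if_neg]
      intro hc
      exact hb (by ext; simpa using congrArg Fin.val hc)
    · simp
  · rw [dif_neg ha, Finset.sum_eq_zero]
    intro b _
    rw [if_neg]
    intro hc
    exact ha (by simpa using (congrArg Fin.val hc) ▸ b.isLt)

/-- with the notation of the context (Hermitian PSD `S`, its m×m top-left
submatrix `Sm`, eigenvector matrices `Pt` (padded), `Pn`, `Q` coming from an orthonormal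
basis of eigenvectors of `S`, diagonal eigenvalue matrices, `C Cᴴ = 1`,
`D = C Λ^{-1/2} Pt Pnᴴ Λn^{1/2}` and `R = C Λ^{-1/2} Pt Qᴴ Q`), one has the identity
`I_q = D Dᴴ + R S Rᴴ`, and the smallest eigenvalue `Δ_q` of `D Dᴴ` satisfies
`1 ≥ Δ_q ≥ 1 − λ_{q+1}(S)/μ_q(Sm)`. -/
theorem stmt_14 {q m n : ℕ} (hq : 0 < q) (hqm : q ≤ m) (hmn : m ≤ n) (hqn : q < n)
    (S : Matrix (Fin n) (Fin n) ℂ) (hS : S.PosSemidef)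
    (Sm : Matrix (Fin m) (Fin m) ℂ)
    (hSm : Sm = S.submatrix (Fin.castLE hmn) (Fin.castLE hmn))
    (hμq : 0 < eigJ Sm q)
    (u : Fin q → Fin m → ℂ)
    (hu_orth : ∀ j k, star (u j) ⬝ᵥ u k = if j = k then 1 else 0)
    (hu_eig : ∀ j : Fin q, Sm.mulVec (u j) = (eigJ Sm ((j : ℕ) + 1) : ℂ) • u j)
    (v : Fin q → Fin n → ℂ)
    (hv_orth : ∀ j k, star (v j) ⬝ᵥ v k = if j = k then 1 else 0)
    (hv_eig : ∀ j : Fin q, S.mulVec (v j) = (eigJ S ((j : ℕ) + 1) : ℂ) • v j)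
    (w : Fin (n - q) → Fin n → ℂ)
    (hw_orth : ∀ j k, star (w j) ⬝ᵥ w k = if j = k then 1 else 0)
    (hw_eig : ∀ j : Fin (n - q), S.mulVec (w j) = (eigJ S (q + (j : ℕ) + 1) : ℂ) • w j)
    (hvw : ∀ j k, star (v j) ⬝ᵥ w k = 0)
    (P : Matrix (Fin q) (Fin m) ℂ) (hP : P = Matrix.of fun j i => star (u j i))
    (Pt : Matrix (Fin q) (Fin n) ℂ)
    (hPt : Pt = Matrix.of fun j (i : Fin n) =>
      if h : (i : ℕ) < m then P j ⟨(i : ℕ), h⟩ else 0)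
    (Pn : Matrix (Fin q) (Fin n) ℂ) (hPn : Pn = Matrix.of fun j i => star (v j i))
    (Q : Matrix (Fin (n - q)) (Fin n) ℂ)
    (hQ : Q = Matrix.of fun j i => star (w j i))
    (hcomplete : Pnᴴ * Pn + Qᴴ * Q = 1)
    (C : Matrix (Fin q) (Fin q) ℂ) (hC : C * Cᴴ = 1)
    (D : Matrix (Fin q) (Fin q) ℂ)
    (hD : D = C * Matrix.diagonal
        (fun j : Fin q => (((Real.sqrt (eigJ Sm ((j : ℕ) + 1)))⁻¹ : ℝ) : ℂ)) * Pt * Pnᴴ *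
      Matrix.diagonal (fun j : Fin q => ((Real.sqrt (eigJ S ((j : ℕ) + 1)) : ℝ) : ℂ)))
    (R : Matrix (Fin q) (Fin n) ℂ)
    (hR : R = C * Matrix.diagonal
        (fun j : Fin q => (((Real.sqrt (eigJ Sm ((j : ℕ) + 1)))⁻¹ : ℝ) : ℂ)) * Pt * Qᴴ * Q) :
    (1 : Matrix (Fin q) (Fin q) ℂ) = D * Dᴴ + R * S * Rᴴ ∧
    eigJ (D * Dᴴ) q ≤ 1 ∧
    1 - eigJ S (q + 1) / eigJ Sm q ≤ eigJ (D * Dᴴ) q := by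
  have hSH : S.IsHermitian := hS.1
  have hSmH : Sm.IsHermitian := hSm ▸ hSH.submatrix _
  have hμpos : ∀ j : Fin q, 0 < eigJ Sm ((j : ℕ) + 1) := fun j =>
    lt_of_lt_of_le hμq (eigJ_anti hSmH (Nat.succ_le_succ (Nat.zero_le _))
      (Nat.succ_le_of_lt j.isLt) hqm)
  have hlamnn : ∀ i, 1 ≤ i → i ≤ n → 0 ≤ eigJ S i := fun i h1 h2 => by
    obtain ⟨a, ha⟩ := eigJ_exists hSH h1 h2
    exact ha ▸ hS.eigenvalues_nonneg a
  set Λi := Matrix.diagonal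
      (fun j : Fin q => (((Real.sqrt (eigJ Sm ((j : ℕ) + 1)))⁻¹ : ℝ) : ℂ)) with hΛi
  set Λs := Matrix.diagonal
      (fun j : Fin q => ((Real.sqrt (eigJ S ((j : ℕ) + 1)) : ℝ) : ℂ)) with hΛs
  set Λn := Matrix.diagonal (fun j : Fin q => ((eigJ S ((j : ℕ) + 1) : ℝ) : ℂ)) with hΛn
  set ΛQ := Matrix.diagonal
      (fun j : Fin (n - q) => ((eigJ S (q + (j : ℕ) + 1) : ℝ) : ℂ)) with hΛQ
  set Λm := Matrix.diagonal (fun j : Fin q => ((eigJ Sm ((j : ℕ) + 1) : ℝ) : ℂ)) with hΛm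
  set dgμinv := Matrix.diagonal
      (fun j : Fin q => (((eigJ Sm ((j : ℕ) + 1))⁻¹ : ℝ) : ℂ)) with hdgμinv
  set E := (1 : Matrix (Fin n) (Fin n) ℂ).submatrix (Fin.castLE hmn) id with hE
  -- orthonormality in matrix form
  have hPP : P * Pᴴ = 1 := by
    rw [hP, rows_mul_conjT]; ext j k; simp [hu_orth j k, Matrix.one_apply]
  have hPnPn : Pn * Pnᴴ = 1 := by
    rw [hPn, rows_mul_conjT]; ext j k; simp [hv_orth j k, Matrix.one_apply]
  have hQQh : Q * Qᴴ = 1 := by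
    rw [hQ, rows_mul_conjT]; ext j k; simp [hw_orth j k, Matrix.one_apply]
  -- eigen-equations in matrix form
  have hSPn : S * Pnᴴ = Pnᴴ * Λn := by
    rw [hPn, hΛn]; exact mul_conjT_rows_eq S v _ hv_eig
  have hSQ : S * Qᴴ = Qᴴ * ΛQ := by
    rw [hQ, hΛQ]; exact mul_conjT_rows_eq S w _ hw_eig
  have hSmP : Sm * Pᴴ = Pᴴ * Λm := by
    rw [hP, hΛm]; exact mul_conjT_rows_eq Sm u _ hu_eig
  -- the padded matrix
  have hPtE : Pt = P * E := hPt.trans (pad_eq_mul hmn P)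
  have hPtPt : Pt * Ptᴴ = 1 := by
    rw [hPtE, Matrix.conjTranspose_mul, Matrix.mul_assoc,
      ← Matrix.mul_assoc E Eᴴ Pᴴ, emb_mul_emb hmn, Matrix.one_mul, hPP]
  have hPtSPt : Pt * S * Ptᴴ = Λm := by
    rw [hPtE, Matrix.conjTranspose_mul]
    have h1 : P * E * S * (Eᴴ * Pᴴ) = P * (E * S * Eᴴ) * Pᴴ := by
      simp only [Matrix.mul_assoc]
    rw [h1, emb_mul_conj hmn, ← hSm, Matrix.mul_assoc, hSmP, ← Matrix.mul_assoc, hPP,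
      Matrix.one_mul]
  set M := C * Λi * Pt with hM
  -- conjTranspose of real diagonals
  have hΛiH : Λiᴴ = Λi := by
    rw [hΛi, Matrix.diagonal_conjTranspose]
    exact congrArg Matrix.diagonal (funext fun j => Complex.conj_ofReal _)
  have hΛsH : Λsᴴ = Λs := by
    rw [hΛs, Matrix.diagonal_conjTranspose]
    exact congrArg Matrix.diagonal (funext fun j => Complex.conj_ofReal _)
  -- primed (right-assoc) rewriting forms
  have hC' : ∀ (X : Matrix (Fin q) (Fin q) ℂ), C * (Cᴴ * X) = X := fun X => by
    rw [← Matrix.mul_assoc, hC, Matrix.one_mul]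
  have hQQ' : ∀ (X : Matrix (Fin (n - q)) (Fin q) ℂ), Q * (Qᴴ * X) = X := fun X => by
    rw [← Matrix.mul_assoc, hQQh, Matrix.one_mul]
  have hSQ' : ∀ (X : Matrix (Fin (n - q)) (Fin q) ℂ), S * (Qᴴ * X) = Qᴴ * (ΛQ * X) :=
    fun X => by rw [← Matrix.mul_assoc, hSQ, Matrix.mul_assoc]
  have hPtSPt' : ∀ (X : Matrix (Fin q) (Fin q) ℂ), Pt * (S * (Ptᴴ * X)) = Λm * X := fun X => by
    rw [← Matrix.mul_assoc, ← Matrix.mul_assoc, hPtSPt]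
  have hPtPt' : ∀ (X : Matrix (Fin q) (Fin q) ℂ), Pt * (Ptᴴ * X) = X := fun X => by
    rw [← Matrix.mul_assoc, hPtPt, Matrix.one_mul]
  -- diagonal computations
  have hΛsΛs : Λs * Λs = Λn := by
    rw [hΛs, hΛn, Matrix.diagonal_mul_diagonal]
    refine congrArg Matrix.diagonal (funext fun j => ?_)
    rw [← Complex.ofReal_mul, Real.mul_self_sqrt (hlamnn _ (Nat.succ_le_succ (Nat.zero_le _))
      (by have := j.isLt; omega))]
  have hΛsΛs' : ∀ (X : Matrix (Fin q) (Fin q) ℂ), Λs * (Λs * X) = Λn * X := fun X => by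
    rw [← Matrix.mul_assoc, hΛsΛs]
  have hΛiΛmΛi : Λi * (Λm * Λi) = 1 := by
    have hfun : (fun j : Fin q => (((Real.sqrt (eigJ Sm ((j : ℕ) + 1)))⁻¹ : ℝ) : ℂ) *
        ((((eigJ Sm ((j : ℕ) + 1) : ℝ) : ℂ)) * (((Real.sqrt (eigJ Sm ((j : ℕ) + 1)))⁻¹ : ℝ) : ℂ)))
        = fun _ => (1 : ℂ) := by
      funext j
      have h1 := hμpos j
      have h2 : Real.sqrt (eigJ Sm ((j : ℕ) + 1)) ≠ 0 := by positivity
      rw [← Complex.ofReal_mul, ← Complex.ofReal_mul]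
      norm_cast
      rw [← Real.mul_self_sqrt h1.le]
      field_simp
      rw [Real.sqrt_sq (Real.sqrt_nonneg _)]
    rw [hΛi, hΛm, Matrix.diagonal_mul_diagonal, Matrix.diagonal_mul_diagonal, hfun,
      Matrix.diagonal_one]
  have hΛiΛmΛi' : ∀ (X : Matrix (Fin q) (Fin q) ℂ), Λi * (Λm * (Λi * X)) = X := fun X => by
    rw [← Matrix.mul_assoc, ← Matrix.mul_assoc, Matrix.mul_assoc Λi Λm Λi, hΛiΛmΛi,
      Matrix.one_mul]
  have hΛiΛi : Λi * Λi = dgμinv := by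
    rw [hΛi, hdgμinv, Matrix.diagonal_mul_diagonal]
    refine congrArg Matrix.diagonal (funext fun j => ?_)
    rw [← Complex.ofReal_mul, ← mul_inv, Real.mul_self_sqrt (hμpos j).le]
  have hΛiΛi' : ∀ (X : Matrix (Fin q) (Fin q) ℂ), Λi * (Λi * X) = dgμinv * X := fun X => by
    rw [← Matrix.mul_assoc, hΛiΛi]
  -- M * S * Mᴴ = 1
  have hMSM : M * (S * Mᴴ) = 1 := by
    rw [hM]
    simp only [Matrix.conjTranspose_mul, hΛiH, Matrix.mul_assoc]
    rw [hPtSPt', hΛiΛmΛi', hC]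
  -- D and R in terms of M
  have hD' : D = M * Pnᴴ * Λs := hD
  have hR' : R = M * Qᴴ * Q := hR
  have hDD : D * Dᴴ = M * (Pnᴴ * (Λn * (Pn * Mᴴ))) := by
    rw [hD']
    simp only [Matrix.conjTranspose_mul, Matrix.conjTranspose_conjTranspose, hΛsH,
      Matrix.mul_assoc]
    rw [hΛsΛs']
  have hRSR : R * S * Rᴴ = M * (Qᴴ * (ΛQ * (Q * Mᴴ))) := by
    rw [hR']
    simp only [Matrix.conjTranspose_mul, Matrix.conjTranspose_conjTranspose, Matrix.mul_assoc]
    rw [hSQ', hQQ']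
  have hSdec : S = Pnᴴ * (Λn * Pn) + Qᴴ * (ΛQ * Q) := by
    calc S = S * (Pnᴴ * Pn + Qᴴ * Q) := by rw [hcomplete, Matrix.mul_one]
    _ = S * (Pnᴴ * Pn) + S * (Qᴴ * Q) := Matrix.mul_add _ _ _
    _ = _ := by
        rw [← Matrix.mul_assoc, ← Matrix.mul_assoc, hSPn, hSQ, Matrix.mul_assoc,
          Matrix.mul_assoc]
  have hIdent : (1 : Matrix (Fin q) (Fin q) ℂ) = D * Dᴴ + R * S * Rᴴ := by
    calc (1 : Matrix (Fin q) (Fin q) ℂ) = M * (S * Mᴴ) := hMSM.symm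
    _ = M * ((Pnᴴ * (Λn * Pn) + Qᴴ * (ΛQ * Q)) * Mᴴ) := by rw [← hSdec]
    _ = M * (Pnᴴ * (Λn * (Pn * Mᴴ))) + M * (Qᴴ * (ΛQ * (Q * Mᴴ))) := by
        rw [Matrix.add_mul, Matrix.mul_add]
        simp only [Matrix.mul_assoc]
    _ = D * Dᴴ + R * S * Rᴴ := by rw [hDD, hRSR]
  have hDDH : (D * Dᴴ).IsHermitian := Matrix.isHermitian_mul_conjTranspose_self D
  have hRSRpsd : (R * S * Rᴴ).PosSemidef := hS.mul_mul_conjTranspose_same R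
  have hDDeq : D * Dᴴ = 1 - R * S * Rᴴ := eq_sub_of_add_eq hIdent.symm
  refine ⟨hIdent, ?_, ?_⟩
  · obtain ⟨i, hi⟩ := eigJ_exists hDDH hq (le_refl q)
    rw [← hi]
    refine eigenvalues_le_of_psd hDDH ?_ i
    have h1 : ((1 : ℝ) : ℂ) • (1 : Matrix (Fin q) (Fin q) ℂ) - D * Dᴴ = R * S * Rᴴ := by
      rw [Complex.ofReal_one, one_smul, hDDeq]
      abel
    rw [h1]
    exact hRSRpsd
  · have hlamq1 : 0 ≤ eigJ S (q + 1) := hlamnn (q + 1) (by omega) (by omega)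
    set cc := eigJ S (q + 1) / eigJ Sm q with hcc
    set B1 := M * Pnᴴ with hB1
    set B2 := M * Qᴴ with hB2
    have hB1B1 : B1 * B1ᴴ = M * (Pnᴴ * (Pn * Mᴴ)) := by
      rw [hB1]
      simp only [Matrix.conjTranspose_mul, Matrix.conjTranspose_conjTranspose, Matrix.mul_assoc]
    have hB2B2 : B2 * B2ᴴ = M * (Qᴴ * (Q * Mᴴ)) := by
      rw [hB2]
      simp only [Matrix.conjTranspose_mul, Matrix.conjTranspose_conjTranspose, Matrix.mul_assoc]
    have hMM : M * Mᴴ = C * (dgμinv * Cᴴ) := by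
      rw [hM]
      simp only [Matrix.conjTranspose_mul, hΛiH, Matrix.mul_assoc]
      rw [hPtPt', hΛiΛi']
    have hsum : B1 * B1ᴴ + B2 * B2ᴴ = C * (dgμinv * Cᴴ) := by
      rw [hB1B1, hB2B2, ← hMM]
      calc M * (Pnᴴ * (Pn * Mᴴ)) + M * (Qᴴ * (Q * Mᴴ))
          = M * ((Pnᴴ * Pn + Qᴴ * Q) * Mᴴ) := by
            rw [Matrix.add_mul, Matrix.mul_add]
            simp only [Matrix.mul_assoc]
      _ = M * Mᴴ := by rw [hcomplete, Matrix.one_mul]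
    set dg1 := Matrix.diagonal
        (fun j : Fin q => ((cc - eigJ S (q + 1) * (eigJ Sm ((j : ℕ) + 1))⁻¹ : ℝ) : ℂ)) with hdg1
    set dg2 := Matrix.diagonal
        (fun j : Fin (n - q) => ((eigJ S (q + 1) - eigJ S (q + (j : ℕ) + 1) : ℝ) : ℂ)) with hdg2
    have hdg1split : dg1 = (cc : ℂ) • (1 : Matrix (Fin q) (Fin q) ℂ)
        - ((eigJ S (q + 1) : ℝ) : ℂ) • dgμinv := by
      ext i j
      rcases eq_or_ne i j with rfl | hij
      · simp only [hdg1, hdgμinv, Matrix.diagonal_apply_eq, Matrix.sub_apply,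
          Matrix.smul_apply, Matrix.one_apply_eq, smul_eq_mul]
        push_cast
        ring
      · simp [hdg1, hdgμinv, Matrix.diagonal_apply_ne _ hij, Matrix.one_apply_ne hij]
    have hdg2split : dg2 = ((eigJ S (q + 1) : ℝ) : ℂ) • (1 : Matrix (Fin (n - q)) (Fin (n - q)) ℂ)
        - ΛQ := by
      ext i j
      rcases eq_or_ne i j with rfl | hij
      · simp only [hdg2, hΛQ, Matrix.diagonal_apply_eq, Matrix.sub_apply,
          Matrix.smul_apply, Matrix.one_apply_eq, smul_eq_mul]
        push_cast
        ring
      · simp [hdg2, hΛQ, Matrix.diagonal_apply_ne _ hij, Matrix.one_apply_ne hij]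
    have hX1 : C * (dg1 * Cᴴ) = (cc : ℂ) • (1 : Matrix (Fin q) (Fin q) ℂ)
        - ((eigJ S (q + 1) : ℝ) : ℂ) • (B1 * B1ᴴ) - ((eigJ S (q + 1) : ℝ) : ℂ) • (B2 * B2ᴴ) := by
      rw [hdg1split, Matrix.sub_mul, Matrix.mul_sub]
      simp only [Matrix.smul_mul, Matrix.mul_smul, Matrix.one_mul]
      rw [hC, ← hsum, smul_add, ← sub_sub]
    have hX2 : ((Real.sqrt (eigJ S (q + 1)) : ℝ) : ℂ) • B1
          * (((Real.sqrt (eigJ S (q + 1)) : ℝ) : ℂ) • B1)ᴴ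
        = ((eigJ S (q + 1) : ℝ) : ℂ) • (B1 * B1ᴴ) := by
      rw [Matrix.conjTranspose_smul, Matrix.smul_mul, Matrix.mul_smul, smul_smul]
      congr 1
      rw [Complex.star_def, Complex.conj_ofReal, ← Complex.ofReal_mul,
        Real.mul_self_sqrt hlamq1]
    have hB2dg : B2 * (ΛQ * B2ᴴ) = R * S * Rᴴ := by
      rw [hB2, hRSR]
      simp only [Matrix.conjTranspose_mul, Matrix.conjTranspose_conjTranspose, Matrix.mul_assoc]
    have hX3 : B2 * (dg2 * B2ᴴ) = ((eigJ S (q + 1) : ℝ) : ℂ) • (B2 * B2ᴴ) - R * S * Rᴴ := by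
      rw [hdg2split, Matrix.sub_mul, Matrix.mul_sub]
      simp only [Matrix.smul_mul, Matrix.mul_smul, Matrix.one_mul]
      rw [hB2dg]
    have hkey : D * Dᴴ - ((1 - cc : ℝ) : ℂ) • 1
        = C * (dg1 * Cᴴ)
          + ((Real.sqrt (eigJ S (q + 1)) : ℝ) : ℂ) • B1
            * (((Real.sqrt (eigJ S (q + 1)) : ℝ) : ℂ) • B1)ᴴ
          + B2 * (dg2 * B2ᴴ) := by
      rw [hX1, hX2, hX3, hDDeq]
      push_cast
      rw [sub_smul, one_smul]
      abel
    have hpsd1 : (C * (dg1 * Cᴴ)).PosSemidef := by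
      have hdgpsd : dg1.PosSemidef := by
        rw [hdg1]
        refine Matrix.posSemidef_diagonal_iff.2 (fun j => ?_)
        rw [Complex.zero_le_real, sub_nonneg, hcc, div_eq_mul_inv]
        refine mul_le_mul_of_nonneg_left ?_ hlamq1
        have h1 : eigJ Sm q ≤ eigJ Sm ((j : ℕ) + 1) :=
          eigJ_anti hSmH (Nat.succ_le_succ (Nat.zero_le _)) (Nat.succ_le_of_lt j.isLt) hqm
        exact inv_anti₀ hμq h1
      have h2 := hdgpsd.mul_mul_conjTranspose_same C
      rwa [Matrix.mul_assoc] at h2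
    have hpsd2 := Matrix.posSemidef_self_mul_conjTranspose
      (((Real.sqrt (eigJ S (q + 1)) : ℝ) : ℂ) • B1)
    have hpsd3 : (B2 * (dg2 * B2ᴴ)).PosSemidef := by
      have hdgpsd : dg2.PosSemidef := by
        rw [hdg2]
        refine Matrix.posSemidef_diagonal_iff.2 (fun j => ?_)
        rw [Complex.zero_le_real, sub_nonneg]
        exact eigJ_anti hSH (by omega) (by omega) (by have := j.isLt; omega)
      have h2 := hdgpsd.mul_mul_conjTranspose_same B2
      rwa [Matrix.mul_assoc] at h2
    have hfinal : (D * Dᴴ - ((1 - cc : ℝ) : ℂ) • 1).PosSemidef :=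
      hkey ▸ ((hpsd1.add hpsd2).add hpsd3)
    obtain ⟨i, hi⟩ := eigJ_exists hDDH hq (le_refl q)
    rw [← hi]
    exact le_eigenvalues_of_psd hDDH hfinal i
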